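/- Let d₁, d₂ ≥ 1, r ∈ [0, d₂/2), α ≥ 0 with α + 2r > (d₁+2d₂)/2, and define ϱ₂(x,y) = |x'-y'| + |x''-y''|/(|x'|+|y'|). Then there is a constant C such that for all y with y' ≠ 0, ∫ (1 + |x''-y''|/(1+|y'|))^{-2r} (1 + ϱ₂(x,y))^{-2α} dx ≤ C (1+|y'|)^{d₂}. -/

import Mathlib

open MeasureTheory Real

private lemma aux_pt (a u s D A t r : ℝ) (ha : 1 ≤ a) (hu : 0 ≤ u) (hs : 0 ≤ s)
    (hD : 0 < D) (hDle : D ≤ 2 * a * (1 + u)) (hr : 0 ≤ r) (ht : 0 ≤ t) (hAt : t ≤ A) :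
    (1 + s / a) ^ (-(2 * r)) * (1 + (u + s / D)) ^ (-A)
      ≤ (1 + u) ^ (-(A - 2 * t)) * (1 + s / (2 * a)) ^ (-(2 * r + t)) := by
  have ha0 : 0 < a := by linarith
  have h2a : (0:ℝ) < 2 * a := by linarith
  have hu1 : (0:ℝ) < 1 + u := by linarith
  have hsD : 0 ≤ s / D := by positivity
  have hsa : (0:ℝ) < 1 + s / (2 * a) := by positivity
  have hsa1 : (0:ℝ) < 1 + s / a := by positivity
  set B := 1 + (u + s / D) with hB_def
  have hBpos : 0 < B := by rw [hB_def]; linarith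
  have hB1 : 1 + u ≤ B := by rw [hB_def]; linarith
  have hB2 : (1 + s / (2 * a)) / (1 + u) ≤ B := by
    have h1 : s / (2 * a * (1 + u)) ≤ s / D := by gcongr
    have h2 : (1 + s / (2 * a)) / (1 + u) ≤ 1 + s / (2 * a * (1 + u)) := by
      rw [div_le_iff₀ hu1]
      have he : (1 + s / (2 * a * (1 + u))) * (1 + u) = (1 + u) + s / (2 * a) := by
        field_simp
      rw [he]; linarith
    calc (1 + s / (2 * a)) / (1 + u) ≤ 1 + s / (2 * a * (1 + u)) := h2
      _ ≤ 1 + s / D := by linarith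
      _ ≤ B := by rw [hB_def]; linarith
  have e1 : B ^ (-A) = B ^ (-(A - t)) * B ^ (-t) := by
    rw [← Real.rpow_add hBpos]; ring_nf
  have b1 : B ^ (-(A - t)) ≤ (1 + u) ^ (-(A - t)) :=
    Real.rpow_le_rpow_of_nonpos hu1 hB1 (by linarith)
  have b2 : B ^ (-t) ≤ (1 + u) ^ t * (1 + s / (2 * a)) ^ (-t) := by
    calc B ^ (-t) ≤ ((1 + s / (2 * a)) / (1 + u)) ^ (-t) :=
          Real.rpow_le_rpow_of_nonpos (div_pos hsa hu1) hB2 (neg_nonpos.mpr ht)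
      _ = (1 + u) ^ t * (1 + s / (2 * a)) ^ (-t) := by
          rw [Real.div_rpow hsa.le hu1.le, Real.rpow_neg hu1.le t, div_eq_mul_inv, inv_inv]
          ring
  have b3 : (1 + s / a) ^ (-(2 * r)) ≤ (1 + s / (2 * a)) ^ (-(2 * r)) := by
    apply Real.rpow_le_rpow_of_nonpos hsa _ (by linarith)
    have : s / (2 * a) ≤ s / a := by gcongr; linarith
    linarith
  calc (1 + s / a) ^ (-(2 * r)) * B ^ (-A)
      = (1 + s / a) ^ (-(2 * r)) * (B ^ (-(A - t)) * B ^ (-t)) := by rw [e1]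
    _ ≤ (1 + s / (2 * a)) ^ (-(2 * r)) *
          ((1 + u) ^ (-(A - t)) * ((1 + u) ^ t * (1 + s / (2 * a)) ^ (-t))) := by
        apply mul_le_mul b3 _ (by positivity) (by positivity)
        exact mul_le_mul b1 b2 (by positivity) (by positivity)
    _ = (1 + u) ^ (-(A - 2 * t)) * (1 + s / (2 * a)) ^ (-(2 * r + t)) := by
        rw [show -(A - 2 * t) = -(A - t) + t by ring, show -(2 * r + t) = -(2 * r) + -t by ring,
          Real.rpow_add hu1, Real.rpow_add hsa]
        ring

theorem weighted_integral_bound_dist_two (d₁ d₂ : ℕ) (hd₁ : 1 ≤ d₁) (hd₂ : 1 ≤ d₂)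
    (r α : ℝ) (hr0 : 0 ≤ r) (hr : r < d₂ / 2) (hα : 0 ≤ α)
    (hαr : (d₁ + 2 * d₂ : ℝ) / 2 < α + 2 * r) :
    ∃ C : ℝ, ∀ y : EuclideanSpace ℝ (Fin d₁) × EuclideanSpace ℝ (Fin d₂), y.1 ≠ 0 →
      (∫ x : EuclideanSpace ℝ (Fin d₁) × EuclideanSpace ℝ (Fin d₂),
          (1 + ‖x.2 - y.2‖ / (1 + ‖y.1‖)) ^ (-(2 * r)) *
            (1 + (‖x.1 - y.1‖ + ‖x.2 - y.2‖ / (‖x.1‖ + ‖y.1‖))) ^ (-(2 * α)))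
        ≤ C * (1 + ‖y.1‖) ^ (d₂ : ℝ) := by
  have hd2r : (0:ℝ) < (d₂ : ℝ) - 2 * r := by linarith
  have key : (d₂ : ℝ) - 2 * r < (2 * α - d₁) / 2 := by linarith
  set t : ℝ := (((d₂ : ℝ) - 2 * r) + (2 * α - d₁) / 2) / 2 with ht_def
  have ht1 : (d₂ : ℝ) - 2 * r < t := by rw [ht_def]; linarith
  have ht2 : t < (2 * α - d₁) / 2 := by rw [ht_def]; linarith
  have ht0 : 0 < t := by linarith
  have hd₁0 : (0:ℝ) ≤ (d₁ : ℝ) := Nat.cast_nonneg _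
  have htA : t ≤ 2 * α := by linarith
  set p : ℝ := 2 * α - 2 * t with hp_def
  set q : ℝ := 2 * r + t with hq_def
  have hp : (d₁ : ℝ) < p := by rw [hp_def]; linarith
  have hq : (d₂ : ℝ) < q := by rw [hq_def]; linarith
  have hInt1 : Integrable (fun x : EuclideanSpace ℝ (Fin d₁) => (1 + ‖x‖) ^ (-p)) :=
    integrable_one_add_norm (by rw [finrank_euclideanSpace_fin]; exact hp)
  have hInt2 : Integrable (fun x : EuclideanSpace ℝ (Fin d₂) => (1 + ‖x‖) ^ (-q)) :=
    integrable_one_add_norm (by rw [finrank_euclideanSpace_fin]; exact hq)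
  set C₁ : ℝ := ∫ x : EuclideanSpace ℝ (Fin d₁), (1 + ‖x‖) ^ (-p) with hC₁
  set C₂ : ℝ := ∫ x : EuclideanSpace ℝ (Fin d₂), (1 + ‖x‖) ^ (-q) with hC₂
  refine ⟨C₁ * C₂ * 2 ^ d₂, fun y hy => ?_⟩
  set a : ℝ := 1 + ‖y.1‖ with ha_def
  have ha : 1 ≤ a := by rw [ha_def]; have := norm_nonneg y.1; linarith
  have ha0 : 0 < a := by linarith
  have h2a : (0:ℝ) < 2 * a := by linarith
  have hy1 : 0 < ‖y.1‖ := norm_pos_iff.mpr hy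
  set g : EuclideanSpace ℝ (Fin d₁) → ℝ := fun x₁ => (1 + ‖x₁ - y.1‖) ^ (-p) with hg_def
  set h : EuclideanSpace ℝ (Fin d₂) → ℝ := fun x₂ => (1 + ‖x₂ - y.2‖ / (2 * a)) ^ (-q)
    with hh_def
  have hg : Integrable g := hInt1.comp_sub_right y.1
  have hnorm_smul : ∀ w : EuclideanSpace ℝ (Fin d₂), ‖(2 * a)⁻¹ • w‖ = ‖w‖ / (2 * a) := by
    intro w
    rw [norm_smul, norm_inv, Real.norm_eq_abs, abs_of_pos h2a, div_eq_inv_mul]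
  have hΦ : Integrable (fun w : EuclideanSpace ℝ (Fin d₂) =>
      (1 + ‖(2 * a)⁻¹ • w‖) ^ (-q)) := by
    exact (integrable_comp_smul_iff volume
      (fun x : EuclideanSpace ℝ (Fin d₂) => (1 + ‖x‖) ^ (-q))
      (inv_ne_zero h2a.ne')).mpr hInt2
  have hh : Integrable h := by
    have := hΦ.comp_sub_right y.2
    refine this.congr (ae_of_all _ fun x => ?_)
    simp only [hh_def, hnorm_smul]
  have hpt : ∀ x : EuclideanSpace ℝ (Fin d₁) × EuclideanSpace ℝ (Fin d₂),
      (1 + ‖x.2 - y.2‖ / (1 + ‖y.1‖)) ^ (-(2 * r)) *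
        (1 + (‖x.1 - y.1‖ + ‖x.2 - y.2‖ / (‖x.1‖ + ‖y.1‖))) ^ (-(2 * α))
        ≤ g x.1 * h x.2 := by
    intro x
    have hDle : ‖x.1‖ + ‖y.1‖ ≤ 2 * a * (1 + ‖x.1 - y.1‖) := by
      have h1 : ‖x.1‖ - ‖y.1‖ ≤ ‖x.1 - y.1‖ := norm_sub_norm_le _ _
      nlinarith [norm_nonneg (x.1 - y.1), norm_nonneg y.1]
    have := aux_pt a ‖x.1 - y.1‖ ‖x.2 - y.2‖ (‖x.1‖ + ‖y.1‖) (2 * α) t r ha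
      (norm_nonneg _) (norm_nonneg _) (by positivity) hDle hr0 ht0.le htA
    simp only [hg_def, hh_def, ha_def] at this ⊢
    convert this using 3 <;> rw [hp_def, hq_def] <;> ring
  have hvol : (volume : Measure (EuclideanSpace ℝ (Fin d₁) × EuclideanSpace ℝ (Fin d₂)))
      = (volume : Measure (EuclideanSpace ℝ (Fin d₁))).prod volume := Measure.volume_eq_prod _ _
  have step1 : (∫ x : EuclideanSpace ℝ (Fin d₁) × EuclideanSpace ℝ (Fin d₂),
      (1 + ‖x.2 - y.2‖ / (1 + ‖y.1‖)) ^ (-(2 * r)) *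
        (1 + (‖x.1 - y.1‖ + ‖x.2 - y.2‖ / (‖x.1‖ + ‖y.1‖))) ^ (-(2 * α)))
      ≤ ∫ x : EuclideanSpace ℝ (Fin d₁) × EuclideanSpace ℝ (Fin d₂), g x.1 * h x.2 := by
    refine integral_mono_of_nonneg (ae_of_all _ fun x => by positivity) ?_ (ae_of_all _ hpt)
    rw [hvol]; exact hg.mul_prod hh
  have step2 : (∫ x : EuclideanSpace ℝ (Fin d₁) × EuclideanSpace ℝ (Fin d₂), g x.1 * h x.2)
      = (∫ x₁, g x₁) * ∫ x₂, h x₂ := by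
    rw [hvol]; exact integral_prod_mul g h
  have hig : (∫ x₁, g x₁) = C₁ := by
    rw [hg_def, hC₁]
    exact integral_sub_right_eq_self (fun x => (1 + ‖x‖) ^ (-p)) y.1
  have hih : (∫ x₂, h x₂) = (2 * a) ^ d₂ * C₂ := by
    have e1 : (∫ x₂, h x₂) = ∫ x₂ : EuclideanSpace ℝ (Fin d₂),
        (1 + ‖(2 * a)⁻¹ • (x₂ - y.2)‖) ^ (-q) := by
      congr 1; funext x₂; rw [hh_def, hnorm_smul]
    have e2 : (∫ x₂ : EuclideanSpace ℝ (Fin d₂), (1 + ‖(2 * a)⁻¹ • (x₂ - y.2)‖) ^ (-q))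
        = ∫ x₂ : EuclideanSpace ℝ (Fin d₂), (1 + ‖(2 * a)⁻¹ • x₂‖) ^ (-q) :=
      integral_sub_right_eq_self (fun x => (1 + ‖(2 * a)⁻¹ • x‖) ^ (-q)) y.2
    have e3 : (∫ x₂ : EuclideanSpace ℝ (Fin d₂), (1 + ‖(2 * a)⁻¹ • x₂‖) ^ (-q))
        = |(((2 * a)⁻¹) ^ Module.finrank ℝ (EuclideanSpace ℝ (Fin d₂)))⁻¹| • C₂ :=
      Measure.integral_comp_smul volume (fun x : EuclideanSpace ℝ (Fin d₂) => (1 + ‖x‖) ^ (-q)) ((2 * a)⁻¹)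
    rw [e1, e2, e3, finrank_euclideanSpace_fin, smul_eq_mul, inv_pow, inv_inv,
      abs_of_pos (by positivity)]
  rw [step2, hig, hih] at step1
  refine step1.trans (le_of_eq ?_)
  rw [Real.rpow_natCast, mul_pow]
  ring
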